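/- Let X be a k-regular loopless graph on n vertices and let τ be the least eigenvalue of its adjacency matrix A. Then any independent set S satisfies |S| ≤ n·(−τ)/(k − τ). -/

import Mathlib

open Matrix Finset

/-- Delsarte–Hoffman ratio bound: in a `k`-regular loopless graph with least adjacency
eigenvalue `τ`, any independent set `S` satisfies `|S| ≤ n·(−τ)/(k−τ)`. -/
theorem stmt1 (n k : ℕ) (hn : 0 < n) (hk : 1 ≤ k)
    (A : Matrix (Fin n) (Fin n) ℝ) (hsym : A.IsSymm)
    (h01 : ∀ i j, A i j = 0 ∨ A i j = 1) (hloop : ∀ i, A i i = 0)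
    (hreg : ∀ i, ∑ j, A i j = k)
    (τ : ℝ)
    (hτeig : ∃ v : Fin n → ℝ, v ≠ 0 ∧ A.mulVec v = τ • v)
    (hτmin : ∀ (μ : ℝ) (v : Fin n → ℝ), v ≠ 0 → A.mulVec v = μ • v → τ ≤ μ)
    (S : Finset (Fin n)) (hind : ∀ i ∈ S, ∀ j ∈ S, i ≠ j → A i j = 0) :
    (S.card : ℝ) ≤ n * (-τ) / (k - τ) := by
  have hsa : ∀ i j, A i j = A j i := by
    intro i j
    have := congrFun (congrFun hsym j) i
    simpa [Matrix.transpose_apply] using this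
  have hA : A.IsHermitian := by
    rw [Matrix.IsHermitian, Matrix.conjTranspose]
    ext i j
    simp [hsa j i]
  -- Rayleigh bound: τ * ⟨x,x⟩ ≤ ⟨x, Ax⟩ for all x
  have hB : (A - τ • 1).IsHermitian := by
    apply hA.sub
    rw [Matrix.IsHermitian, Matrix.conjTranspose]
    ext i j
    by_cases h : i = j <;> simp [Matrix.one_apply, h, eq_comm]
  have hBmul : ∀ x : Fin n → ℝ, (A - τ • 1) *ᵥ x = A *ᵥ x - τ • x := by
    intro x
    rw [Matrix.sub_mulVec, Matrix.smul_mulVec, Matrix.one_mulVec]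
  have heig : ∀ i, 0 ≤ hB.eigenvalues i := by
    intro i
    have hv := hB.mulVec_eigenvectorBasis i
    have hvne : (⇑(hB.eigenvectorBasis i) : Fin n → ℝ) ≠ 0 := by
      intro h
      exact hB.eigenvectorBasis.toBasis.ne_zero i (by ext j; exact congrFun h j)
    have hAv : A *ᵥ ⇑(hB.eigenvectorBasis i)
        = (hB.eigenvalues i + τ) • ⇑(hB.eigenvectorBasis i) := by
      have := hBmul (⇑(hB.eigenvectorBasis i))
      rw [hv] at this
      ext j
      have := congrFun this j
      simp only [Pi.smul_apply, Pi.sub_apply, smul_eq_mul] at this ⊢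
      linarith
    have := hτmin _ _ hvne hAv
    linarith
  have hPSD : (A - τ • 1).PosSemidef := hB.posSemidef_iff_eigenvalues_nonneg.mpr heig
  have rayleigh : ∀ x : Fin n → ℝ, τ * (x ⬝ᵥ x) ≤ x ⬝ᵥ (A *ᵥ x) := by
    intro x
    have h0 := hPSD.dotProduct_mulVec_nonneg x
    rw [hBmul, star_trivial, dotProduct_sub, dotProduct_smul] at h0
    simp only [smul_eq_mul] at h0
    linarith
  -- τ ≤ -1 using an edge
  have hτneg : τ ≤ -1 := by
    set i0 : Fin n := ⟨0, hn⟩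
    have hex : ∃ j, A i0 j ≠ 0 := by
      by_contra h
      push_neg at h
      have : (∑ j, A i0 j) = 0 := Finset.sum_eq_zero fun j _ => h j
      rw [hreg] at this
      have : (1 : ℝ) ≤ 0 := by
        calc (1:ℝ) ≤ (k:ℝ) := by exact_mod_cast hk
        _ = 0 := this
      linarith
    obtain ⟨j, hj⟩ := hex
    have hij : A i0 j = 1 := (h01 i0 j).resolve_left hj
    have hji : A j i0 = 1 := by rw [hsa j i0, hij]
    have hne : j ≠ i0 := by
      intro h; rw [h, hloop] at hij; linarith
    set x : Fin n → ℝ := Pi.single i0 1 - Pi.single j 1 with hx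
    have hxx : x ⬝ᵥ x = 2 := by
      rw [hx, dotProduct_sub, sub_dotProduct, sub_dotProduct,
        single_dotProduct, single_dotProduct, single_dotProduct, single_dotProduct]
      simp [Pi.single_apply, hne, hne.symm]
      norm_num
    have hxAx : x ⬝ᵥ (A *ᵥ x) = -2 := by
      rw [hx, Matrix.mulVec_sub, Matrix.mulVec_single, Matrix.mulVec_single,
        dotProduct_sub, sub_dotProduct, sub_dotProduct,
        single_dotProduct, single_dotProduct]
      simp [hloop, hij, hji]
      norm_num
    have := rayleigh x
    rw [hxx, hxAx] at this
    linarith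
  have hn' : (0:ℝ) < n := by exact_mod_cast hn
  have hk' : (1:ℝ) ≤ k := by exact_mod_cast hk
  set s : ℝ := (S.card : ℝ) with hs
  have hs0 : 0 ≤ s := by positivity
  have hsn : s ≤ n := by
    rw [hs]
    exact_mod_cast (S.card_le_univ.trans_eq (by simp))
  -- test vector
  set f : Fin n → ℝ := fun i => (if i ∈ S then (n : ℝ) else 0) - s with hf
  have hcol : ∀ j, ∑ i, A i j = k := by
    intro j
    rw [Finset.sum_congr rfl fun i _ => hsa i j]
    exact hreg j
  have hP1 : ∑ i ∈ S, ∑ j ∈ S, A i j = 0 := by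
    apply Finset.sum_eq_zero
    intro i hi
    apply Finset.sum_eq_zero
    intro j hj
    by_cases h : i = j
    · rw [h]; exact hloop j
    · exact hind i hi j hj h
  have hP2 : ∑ i, ∑ j ∈ S, A i j = s * k := by
    rw [show ∑ i, ∑ j ∈ S, A i j = ∑ j ∈ S, ∑ i, A i j from Finset.sum_comm]
    rw [Finset.sum_congr rfl fun j _ => hcol j]
    simp [hs, mul_comm]
  have hrow : ∀ i, (A *ᵥ f) i = n * (∑ j ∈ S, A i j) - s * k := by
    intro i
    rw [Matrix.mulVec, dotProduct]
    calc ∑ j, A i j * f j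
        = ∑ j, ((if j ∈ S then (n:ℝ) * A i j else 0) - s * A i j) := by
          apply Finset.sum_congr rfl
          intro j _
          by_cases hj : j ∈ S <;> simp [hf, hj] <;> ring
      _ = n * (∑ j ∈ S, A i j) - s * k := by
          rw [Finset.sum_sub_distrib, ← Finset.mul_sum, hreg,
            Finset.sum_ite_mem, Finset.univ_inter, Finset.mul_sum]
  have hQ : f ⬝ᵥ (A *ᵥ f) = -(n * s^2 * k) := by
    rw [dotProduct]
    calc ∑ i, f i * (A *ᵥ f) i
        = ∑ i, ((if i ∈ S then (n:ℝ) * (n * (∑ j ∈ S, A i j) - s * k) else 0)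
            - s * (n * (∑ j ∈ S, A i j) - s * k)) := by
          apply Finset.sum_congr rfl
          intro i _
          rw [hrow i]
          by_cases hi : i ∈ S <;> simp [hf, hi] <;> ring
      _ = -(n * s^2 * k) := by
          rw [Finset.sum_sub_distrib, Finset.sum_ite_mem, Finset.univ_inter,
            ← Finset.mul_sum, ← Finset.mul_sum]
          have e1 : ∑ i ∈ S, ((n:ℝ) * (∑ j ∈ S, A i j) - s * k) = -(s * (s * k)) := by
            rw [Finset.sum_sub_distrib, ← Finset.mul_sum, hP1, Finset.sum_const,
              nsmul_eq_mul, ← hs]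
            ring
          have e2 : ∑ i : Fin n, ((n:ℝ) * (∑ j ∈ S, A i j) - s * k) = 0 := by
            rw [Finset.sum_sub_distrib, ← Finset.mul_sum, hP2, Finset.sum_const,
              nsmul_eq_mul,
              show ((Finset.univ : Finset (Fin n)).card : ℝ) = n by simp]
            ring
          rw [e1, e2]
          ring
  have hN : f ⬝ᵥ f = n * s * (n - s) := by
    rw [dotProduct]
    calc ∑ i, f i * f i
        = ∑ i, ((if i ∈ S then (n:ℝ)^2 - 2 * n * s else 0) + s^2) := by
          apply Finset.sum_congr rfl
          intro i _
          by_cases hi : i ∈ S <;> simp [hf, hi] <;> ring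
      _ = n * s * (n - s) := by
          rw [Finset.sum_add_distrib, Finset.sum_ite_mem, Finset.univ_inter,
            Finset.sum_const, Finset.sum_const]
          simp [hs]
          ring
  have key := rayleigh f
  rw [hQ, hN] at key
  -- conclude
  rw [le_div_iff₀ (by linarith : (0:ℝ) < k - τ)]
  rcases eq_or_lt_of_le hs0 with h0 | hpos
  · rw [← h0]
    have : (0:ℝ) ≤ n * (-τ) := by nlinarith
    linarith
  · nlinarith [mul_pos hn' hpos, mul_pos (mul_pos hn' hpos) hpos]
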